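/- Let $Y$ be a separable Hilbert space, $\mathcal{A}:Y\to Y^*$ a bounded, symmetric, linear operator with $\langle\mathcal{A}y,y\rangle \ge c\|y\|^2$ for some $c>0$, let $\mathcal{R}:Y\to[0,\infty]$ be convex, lower semicontinuous, positively 1-homogeneous with $\mathcal{R}(0)=0$, and let $\ell\in W^{1,1}((0,T);Y^*)$. Set $\mathcal{E}(t,y) = \tfrac12\langle\mathcal{A}y,y\rangle - \langle\ell(t),y\rangle$. If $y\in W^{1,1}((0,T);Y)$ is an energetic solution (satisfying global stability and the energy balance), then $\|\dot{y}(t)\|_Y \le \tfrac{1}{c}\|\dot\ell(t)\|_{Y^*}$ for almost every $t\in[0,T]$. -/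

import Mathlib

open scoped BigOperators ENNReal RealInnerProductSpace
open MeasureTheory Filter Metric Topology
open scoped Topology

noncomputable section

set_option maxHeartbeats 1000000 in
/-- a priori bound for energetic solutions of a quadratic evolutionary
rate-independent system: `‖ẏ(t)‖ ≤ (1/c)‖ℓ̇(t)‖` for a.e. `t ∈ [0,T]`. -/
theorem statement9 {Y : Type*} [NormedAddCommGroup Y] [InnerProductSpace ℝ Y]
    [CompleteSpace Y] [SecondCountableTopology Y]
    (T : ℝ) (hT : 0 < T)
    (A : Y →L[ℝ] Y) (hsym : ∀ u v : Y, ⟪A u, v⟫ = ⟪u, A v⟫)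
    (c : ℝ) (hc : 0 < c) (hcoer : ∀ y : Y, c * ‖y‖^2 ≤ ⟪A y, y⟫)
    (R : Y → ℝ≥0∞)
    (hconv : ∀ u v : Y, ∀ t : ℝ, 0 ≤ t → t ≤ 1 →
      R (t • u + (1 - t) • v) ≤ ENNReal.ofReal t * R u + ENNReal.ofReal (1 - t) * R v)
    (hlsc : LowerSemicontinuous R)
    (hhom : ∀ α : ℝ, 0 ≤ α → ∀ v : Y, R (α • v) = ENNReal.ofReal α * R v)
    (hR0 : R 0 = 0)
    -- ℓ ∈ W^{1,1}((0,T); Y*): absolutely continuous with integrable derivative ℓ'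
    (ℓ ℓ' : ℝ → Y)
    (hℓint : IntervalIntegrable ℓ' volume 0 T)
    (hℓFTC : ∀ s ∈ Set.Icc (0:ℝ) T, ∀ t ∈ Set.Icc (0:ℝ) T,
      ℓ t - ℓ s = ∫ σ in s..t, ℓ' σ)
    -- y ∈ W^{1,1}((0,T); Y)
    (y y' : ℝ → Y)
    (hyint : IntervalIntegrable y' volume 0 T)
    (hyFTC : ∀ s ∈ Set.Icc (0:ℝ) T, ∀ t ∈ Set.Icc (0:ℝ) T,
      y t - y s = ∫ σ in s..t, y' σ)
    (E : ℝ → Y → ℝ)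
    (hE : ∀ t z, E t z = (1/2) * ⟪A z, z⟫ - ⟪ℓ t, z⟫)
    -- global stability
    (hstab : ∀ t ∈ Set.Icc (0:ℝ) T, ∀ z : Y,
      ENNReal.ofReal (E t (y t) - E t z) ≤ R (z - y t))
    -- energy balance
    (hbal : ∀ t ∈ Set.Icc (0:ℝ) T,
      (∫⁻ s in Set.Ioc (0:ℝ) t, R (y' s)) ≠ ⊤ ∧
      E t (y t) + (∫⁻ s in Set.Ioc (0:ℝ) t, R (y' s)).toReal
        = E 0 (y 0) - ∫ s in (0:ℝ)..t, ⟪ℓ' s, y s⟫) :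
    ∀ᵐ t ∂(volume : Measure ℝ), t ∈ Set.Icc (0:ℝ) T →
      ‖y' t‖ ≤ (1 / c) * ‖ℓ' t‖ := by
  borelize Y
  have hTm : (0:ℝ) ≤ T := hT.le
  have h0I : (0:ℝ) ∈ Set.Icc (0:ℝ) T := ⟨le_refl 0, hTm⟩
  -- energy expansion
  have hEexp : ∀ s : ℝ, ∀ z w : Y, E s (z + w)
      = E s z + ⟪A z, w⟫ + (1/2) * ⟪A w, w⟫ - ⟪ℓ s, w⟫ := by
    intro s z w
    have h1 : ⟪A (z + w), z + w⟫ = ⟪A z, z⟫ + 2 * ⟪A z, w⟫ + ⟪A w, w⟫ := by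
      have hmap : A (z + w) = A z + A w := map_add A z w
      have h2 : ⟪A w, z⟫ = ⟪A z, w⟫ := by rw [hsym w z, real_inner_comm]
      rw [hmap, inner_add_left, inner_add_right, inner_add_right, h2]; ring
    rw [hE, hE, h1, inner_add_right]; ring
  have hAnn : ∀ v : Y, 0 ≤ ⟪A v, v⟫ := fun v => le_trans (by positivity) (hcoer v)
  -- subgradient step
  have hxi : ∀ s ∈ Set.Icc (0:ℝ) T, ∀ v : Y, R v ≠ ⊤ →
      ⟪ℓ s - A (y s), v⟫ ≤ (R v).toReal := by
    intro s hs v hv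
    set K := ⟪A v, v⟫ with hKdef
    have hK : 0 ≤ K := hAnn v
    have key : ∀ h : ℝ, 0 < h → h ≤ 1 →
        ⟪ℓ s - A (y s), v⟫ ≤ (R v).toReal + h/2 * K := by
      intro h h0 h1
      have hst := hstab s hs (y s + h • v)
      have hz : y s + h • v - y s = h • v := by abel
      rw [hz, hhom h h0.le v] at hst
      have hD : E s (y s) - E s (y s + h • v)
          = h * ⟪ℓ s - A (y s), v⟫ - h^2/2 * K := by
        rw [hEexp s (y s) (h • v)]
        have e1 : ⟪A (y s), h • v⟫ = h * ⟪A (y s), v⟫ := real_inner_smul_right _ _ _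
        have e2 : ⟪A (h • v), h • v⟫ = h * (h * K) := by
          rw [A.map_smul, hKdef, real_inner_smul_left, real_inner_smul_right]
        have e3 : ⟪ℓ s, h • v⟫ = h * ⟪ℓ s, v⟫ := real_inner_smul_right _ _ _
        rw [e1, e2, e3, inner_sub_left]; ring
      have hne : ENNReal.ofReal h * R v ≠ ⊤ := ENNReal.mul_ne_top ENNReal.ofReal_ne_top hv
      have h2 := (ENNReal.ofReal_le_iff_le_toReal hne).mp hst
      rw [ENNReal.toReal_mul, ENNReal.toReal_ofReal h0.le, hD] at h2
      nlinarith [h2]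
    refine le_of_forall_pos_le_add ?_
    intro ε hε
    rcases le_or_gt K 0 with hK0 | hK0
    · have := key 1 one_pos le_rfl; nlinarith
    · have hh0 : 0 < min 1 (ε / K) := lt_min one_pos (by positivity)
      have hkey := key (min 1 (ε/K)) hh0 (min_le_left _ _)
      have h2 : min 1 (ε/K) * K ≤ ε := by
        calc min 1 (ε/K) * K ≤ (ε/K) * K :=
              mul_le_mul_of_nonneg_right (min_le_right _ _) hK
          _ = ε := by field_simp
      nlinarith
  -- continuity of y and bound
  have huIcc : Set.uIcc (0:ℝ) T = Set.Icc 0 T := Set.uIcc_of_le hTm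
  have hyT : IntegrableOn y' (Set.Ioc 0 T) volume :=
    (intervalIntegrable_iff_integrableOn_Ioc_of_le hTm).mp hyint
  have hℓT : IntegrableOn ℓ' (Set.Ioc 0 T) volume :=
    (intervalIntegrable_iff_integrableOn_Ioc_of_le hTm).mp hℓint
  have hycont : ContinuousOn y (Set.Icc 0 T) := by
    have h1 : ContinuousOn (fun t => y 0 + ∫ σ in (0:ℝ)..t, y' σ) (Set.Icc 0 T) := by
      apply ContinuousOn.add continuousOn_const
      have h2 := intervalIntegral.continuousOn_primitive_interval
        (μ := volume) (f := y') (a := 0) (b := T)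
        (by rw [huIcc]; exact (integrableOn_Icc_iff_integrableOn_Ioc).mpr hyT)
      rwa [huIcc] at h2
    apply h1.congr
    intro t ht
    exact sub_eq_iff_eq_add'.mp (hyFTC 0 h0I t ht)
  obtain ⟨M, hM⟩ := isCompact_Icc.exists_bound_of_continuousOn hycont
  have hyaesm : AEStronglyMeasurable y (volume.restrict (Set.Ioc 0 T)) :=
    (hycont.mono Set.Ioc_subset_Icc_self).aestronglyMeasurable measurableSet_Ioc
  -- integrability of the power term
  have hinny : IntegrableOn (fun σ => ⟪ℓ' σ, y σ⟫) (Set.Ioc 0 T) volume := by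
    apply Integrable.mono' ((hℓT.norm).mul_const M)
    · exact AEStronglyMeasurable.inner hℓT.aestronglyMeasurable hyaesm
    · filter_upwards [ae_restrict_mem measurableSet_Ioc] with σ hσ
      calc ‖⟪ℓ' σ, y σ⟫‖ ≤ ‖ℓ' σ‖ * ‖y σ‖ := norm_inner_le_norm _ _
        _ ≤ ‖ℓ' σ‖ * M := by
            have := hM σ (Set.Ioc_subset_Icc_self hσ)
            have h0 : (0:ℝ) ≤ ‖ℓ' σ‖ := norm_nonneg _
            nlinarith
  have hinconst : ∀ (u : Y) (s t : ℝ), Set.Ioc s t ⊆ Set.Ioc 0 T →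
      IntegrableOn (fun σ => ⟪ℓ' σ, u⟫) (Set.Ioc s t) volume := by
    intro u s t hsub
    have h1 : (fun σ => ⟪ℓ' σ, u⟫) = fun σ => ⟪u, ℓ' σ⟫ :=
      funext fun σ => real_inner_comm _ _
    rw [h1]
    exact (hℓT.mono_set hsub).const_inner u
  -- measurability of R ∘ y'
  have hRy' : AEMeasurable (fun σ => R (y' σ)) (volume.restrict (Set.Ioc 0 T)) :=
    hlsc.measurable.comp_aemeasurable hyT.aestronglyMeasurable.aemeasurable
  -- splitting of dissipation
  have hsplit : ∀ s t : ℝ, 0 ≤ s → s ≤ t →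
      (∫⁻ σ in Set.Ioc (0:ℝ) t, R (y' σ))
        = (∫⁻ σ in Set.Ioc (0:ℝ) s, R (y' σ)) + ∫⁻ σ in Set.Ioc s t, R (y' σ) := by
    intro s t h0s hst
    rw [← Set.Ioc_union_Ioc_eq_Ioc h0s hst,
      lintegral_union measurableSet_Ioc (Set.Ioc_disjoint_Ioc_of_le le_rfl)]
  -- the key inequality (star)
  have hstar : ∀ s t : ℝ, 0 ≤ s → s ≤ t → t ≤ T →
      (1/2) * ⟪A (y t - y s), y t - y s⟫ ≤ ∫ σ in Set.Ioc s t, ⟪ℓ' σ, y t - y σ⟫ := by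
    intro s t h0s hst htT
    have hsI : s ∈ Set.Icc (0:ℝ) T := ⟨h0s, hst.trans htT⟩
    have htI : t ∈ Set.Icc (0:ℝ) T := ⟨h0s.trans hst, htT⟩
    have hsub : Set.Ioc s t ⊆ Set.Ioc 0 T := Set.Ioc_subset_Ioc h0s htT
    have hfin_t := (hbal t htI).1
    have hfin_s := (hbal s hsI).1
    have hfin_st : (∫⁻ σ in Set.Ioc s t, R (y' σ)) ≠ ⊤ := by
      rw [hsplit s t h0s hst] at hfin_t
      exact (ENNReal.add_ne_top.mp hfin_t).2
    have hRst : AEMeasurable (fun σ => R (y' σ)) (volume.restrict (Set.Ioc s t)) :=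
      hRy'.mono_measure (Measure.restrict_mono hsub le_rfl)
    have hy'st : IntegrableOn y' (Set.Ioc s t) volume := hyT.mono_set hsub
    have hℓst : IntegrableOn ℓ' (Set.Ioc s t) volume := hℓT.mono_set hsub
    -- from the subgradient step: ⟪ξ, d⟫ ≤ (Dst).toReal
    have h4b : ∀ᵐ σ ∂(volume.restrict (Set.Ioc s t)),
        ⟪ℓ s - A (y s), y' σ⟫ ≤ (R (y' σ)).toReal := by
      filter_upwards [ae_lt_top' hRst hfin_st] with σ hσ
      exact hxi s hsI (y' σ) hσ.ne
    have hyd : (∫ σ in Set.Ioc s t, y' σ) = y t - y s := by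
      rw [← intervalIntegral.integral_of_le hst]
      exact (hyFTC s hsI t htI).symm
    have h4f : ⟪ℓ s - A (y s), y t - y s⟫ ≤ (∫⁻ σ in Set.Ioc s t, R (y' σ)).toReal := by
      have hint1 : Integrable (fun σ => ⟪ℓ s - A (y s), y' σ⟫)
          (volume.restrict (Set.Ioc s t)) := hy'st.const_inner _
      have hint2 : Integrable (fun σ => (R (y' σ)).toReal)
          (volume.restrict (Set.Ioc s t)) :=
        integrable_toReal_of_lintegral_ne_top hRst hfin_st
      have hmono := integral_mono_ae hint1 hint2 h4b
      rw [integral_inner hy'st, hyd, integral_toReal hRst (ae_lt_top' hRst hfin_st)] at hmono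
      exact hmono
    -- balance difference
    have hℓyII : ∀ a b : ℝ, 0 ≤ a → a ≤ b → b ≤ T →
        IntervalIntegrable (fun σ => ⟪ℓ' σ, y σ⟫) volume a b := fun a b h1 h2 h3 =>
      (intervalIntegrable_iff_integrableOn_Ioc_of_le h2).mpr
        (hinny.mono_set (Set.Ioc_subset_Ioc h1 h3))
    have hbal_t := (hbal t htI).2
    have hbal_s := (hbal s hsI).2
    have hIadd : (∫ σ in (0:ℝ)..s, ⟪ℓ' σ, y σ⟫) + (∫ σ in s..t, ⟪ℓ' σ, y σ⟫)
        = ∫ σ in (0:ℝ)..t, ⟪ℓ' σ, y σ⟫ :=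
      intervalIntegral.integral_add_adjacent_intervals
        (hℓyII 0 s le_rfl h0s (hst.trans htT)) (hℓyII s t h0s hst htT)
    have htoReal : (∫⁻ σ in Set.Ioc (0:ℝ) t, R (y' σ)).toReal
        = (∫⁻ σ in Set.Ioc (0:ℝ) s, R (y' σ)).toReal
          + (∫⁻ σ in Set.Ioc s t, R (y' σ)).toReal := by
      rw [hsplit s t h0s hst, ENNReal.toReal_add hfin_s hfin_st]
    have h4g : E t (y t) - E s (y s) + (∫⁻ σ in Set.Ioc s t, R (y' σ)).toReal
        = -(∫ σ in s..t, ⟪ℓ' σ, y σ⟫) := by linarith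
    -- FTC for the load term
    have h4h : (∫ σ in Set.Ioc s t, ⟪ℓ' σ, y t⟫) = ⟪ℓ t, y t⟫ - ⟪ℓ s, y t⟫ := by
      have h2 : (∫ σ in Set.Ioc s t, ℓ' σ) = ℓ t - ℓ s := by
        rw [← intervalIntegral.integral_of_le hst]
        exact (hℓFTC s hsI t htI).symm
      have h1 : (fun σ => ⟪ℓ' σ, y t⟫) = fun σ => ⟪y t, ℓ' σ⟫ :=
        funext fun σ => real_inner_comm _ _
      rw [h1, integral_inner hℓst, h2, real_inner_comm, inner_sub_left]
    -- energy algebra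
    have h4i : E t (y t) - E s (y s)
        = ⟪A (y s), y t - y s⟫ + (1/2) * ⟪A (y t - y s), y t - y s⟫
          + ⟪ℓ s, y s⟫ - ⟪ℓ t, y t⟫ := by
      have h1 : y t = y s + (y t - y s) := by abel
      have h2 := hEexp s (y s) (y t - y s)
      rw [← h1] at h2
      have h3 : E t (y t) = E s (y t) - ⟪ℓ t, y t⟫ + ⟪ℓ s, y t⟫ := by
        rw [hE, hE]; ring
      have h4 : ⟪ℓ s, y t - y s⟫ = ⟪ℓ s, y t⟫ - ⟪ℓ s, y s⟫ := inner_sub_right _ _ _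
      linarith
    have hξd : ⟪ℓ s - A (y s), y t - y s⟫
        = ⟪ℓ s, y t - y s⟫ - ⟪A (y s), y t - y s⟫ := inner_sub_left _ _ _
    have h4hd : ⟪ℓ s, y t - y s⟫ = ⟪ℓ s, y t⟫ - ⟪ℓ s, y s⟫ := inner_sub_right _ _ _
    have hsubint : (∫ σ in Set.Ioc s t, ⟪ℓ' σ, y t - y σ⟫)
        = (∫ σ in Set.Ioc s t, ⟪ℓ' σ, y t⟫) - ∫ σ in Set.Ioc s t, ⟪ℓ' σ, y σ⟫ := by
      rw [← integral_sub (hinconst (y t) s t hsub) (hinny.mono_set hsub)]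
      congr 1; funext σ; rw [inner_sub_right]
    have hIoc : (∫ σ in s..t, ⟪ℓ' σ, y σ⟫) = ∫ σ in Set.Ioc s t, ⟪ℓ' σ, y σ⟫ :=
      intervalIntegral.integral_of_le hst
    linarith
  -- Lebesgue differentiation helper
  have hLeb : ∀ f : ℝ → Y, IntegrableOn f (Set.Ioc 0 T) volume →
      ∀ᵐ t ∂(volume : Measure ℝ), t ∈ Set.Ioc 0 T →
        Tendsto (fun s => (∫ σ in Set.Ioc s t, ‖f σ - f t‖) / (t - s)) (𝓝[<] t) (𝓝 0) := by
    intro f hf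
    set g := (Set.Ioc (0:ℝ) T).indicator f with hgdef
    have hgint : Integrable g volume := hf.integrable_indicator measurableSet_Ioc
    have hloc : LocallyIntegrable g volume := hgint.locallyIntegrable
    filter_upwards [IsUnifLocDoublingMeasure.ae_tendsto_average_norm_sub (μ := volume) hloc 1]
      with t ht htI
    have hδ : Tendsto (fun s : ℝ => t - s) (𝓝[<] t) (𝓝[>] 0) := by
      rw [tendsto_nhdsWithin_iff]
      constructor
      · have h2 : Tendsto (fun s : ℝ => t - s) (𝓝 t) (𝓝 (t - t)) :=
          (continuous_const.sub continuous_id).tendsto t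
        rw [sub_self] at h2
        exact h2.mono_left nhdsWithin_le_nhds
      · filter_upwards [self_mem_nhdsWithin] with s hs
        exact Set.mem_Ioi.mpr (sub_pos.mpr hs)
    have hmem : ∀ᶠ s in 𝓝[<] t, t ∈ closedBall ((fun _ : ℝ => t) s) (1 * (t - s)) := by
      filter_upwards [self_mem_nhdsWithin] with s hs
      simp only [Metric.mem_closedBall, dist_self, one_mul]
      have h3 : s < t := hs
      linarith
    have havg := ht (fun _ => t) (fun s => t - s) hδ hmem
    have hIoo : Set.Ioo (0:ℝ) t ∈ 𝓝[<] t := Ioo_mem_nhdsLT_of_mem ⟨htI.1, le_rfl⟩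
    refine squeeze_zero' ?_ ?_ (by simpa using havg.const_mul (2:ℝ))
    · filter_upwards [hIoo] with s hs
      exact div_nonneg (setIntegral_nonneg measurableSet_Ioc fun σ _ => norm_nonneg _)
        (sub_pos.mpr hs.2).le
    · filter_upwards [hIoo] with s hs
      have hst : s < t := hs.2
      have hδp : (0:ℝ) < t - s := sub_pos.mpr hst
      have hsub2 : Set.Ioc s t ⊆ Set.Ioc 0 T := Set.Ioc_subset_Ioc hs.1.le htI.2
      have h1 : (∫ σ in Set.Ioc s t, ‖f σ - f t‖) = ∫ σ in Set.Ioc s t, ‖g σ - g t‖ := by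
        refine setIntegral_congr_fun measurableSet_Ioc fun σ hσ => ?_
        rw [hgdef, Set.indicator_of_mem (hsub2 hσ), Set.indicator_of_mem htI]
      have hball_int : IntegrableOn (fun x => ‖g x - g t‖) (closedBall t (t - s)) volume :=
        ((hgint.integrableOn).sub
          (integrableOn_const measure_closedBall_lt_top.ne)).norm
      have h2 : (∫ σ in Set.Ioc s t, ‖g σ - g t‖)
          ≤ ∫ x in closedBall t (t - s), ‖g x - g t‖ := by
        refine setIntegral_mono_set hball_int
          (Eventually.of_forall fun x => norm_nonneg _) ?_
        refine HasSubset.Subset.eventuallyLE ?_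
        rw [Real.closedBall_eq_Icc]
        intro σ hσ
        exact ⟨by linarith [hσ.1], by linarith [hσ.2]⟩
      have h3 : (∫ x in closedBall t (t - s), ‖g x - g t‖)
          = (2 * (t - s)) * ⨍ x in closedBall t (t - s), ‖g x - g t‖ := by
        rw [setAverage_eq, Real.volume_real_closedBall (by linarith), smul_eq_mul]
        field_simp
      rw [h1, div_le_iff₀ hδp]
      calc (∫ σ in Set.Ioc s t, ‖g σ - g t‖)
          ≤ (2 * (t - s)) * ⨍ x in closedBall t (t - s), ‖g x - g t‖ := by rw [← h3]; exact h2
        _ = 2 * (⨍ x in closedBall t (t - s), ‖g x - g t‖) * (t - s) := by ring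
  have hne0 : ∀ᵐ t ∂(volume : Measure ℝ), t ≠ (0:ℝ) := by
    have h1 : {t : ℝ | ¬ t ≠ 0} = {0} := by ext x; simp
    rw [ae_iff, h1]
    exact measure_singleton 0
  -- main argument
  filter_upwards [hLeb ℓ' hℓT, hLeb y' hyT, hne0] with t hLt hYt ht0 htIcc
  have htIoc : t ∈ Set.Ioc 0 T := ⟨lt_of_le_of_ne htIcc.1 (Ne.symm ht0), htIcc.2⟩
  replace hLt := hLt htIoc
  replace hYt := hYt htIoc
  by_cases hv0 : ‖y' t‖ = 0
  · rw [hv0]; positivity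
  have hvpos : 0 < ‖y' t‖ := lt_of_le_of_ne (norm_nonneg _) (Ne.symm hv0)
  have hmain : (c/2) * ‖y' t‖^2 ≤ (1/2) * ⟪ℓ' t, y' t⟫ := by
    set P := ⟪ℓ' t, y' t⟫ with hP
    have hIoo : Set.Ioo (0:ℝ) t ∈ 𝓝[<] t := Ioo_mem_nhdsLT_of_mem ⟨htIoc.1, le_rfl⟩
    have hev : ∀ᶠ s in 𝓝[<] t, (c/2) * ‖y' t‖^2
        ≤ (1/2)*P
          + ((∫ σ in Set.Ioc s t, ‖ℓ' σ - ℓ' t‖) / (t - s))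
              * (‖y' t‖ + (∫ σ in Set.Ioc s t, ‖y' σ - y' t‖) / (t - s))
          + ‖ℓ' t‖ * ((∫ σ in Set.Ioc s t, ‖y' σ - y' t‖) / (t - s))
          + c * ((∫ σ in Set.Ioc s t, ‖y' σ - y' t‖) / (t - s)) * ‖y' t‖
          + (3*c/2) * ((∫ σ in Set.Ioc s t, ‖y' σ - y' t‖) / (t - s))^2 := by
      filter_upwards [hIoo] with s hs
      obtain ⟨hs0, hst⟩ := hs
      have hδp : (0:ℝ) < t - s := sub_pos.mpr hst
      have hsub : Set.Ioc s t ⊆ Set.Ioc 0 T := Set.Ioc_subset_Ioc hs0.le htIoc.2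
      have hy'st : IntegrableOn y' (Set.Ioc s t) volume := hyT.mono_set hsub
      have hℓst : IntegrableOn ℓ' (Set.Ioc s t) volume := hℓT.mono_set hsub
      set a := ∫ σ in Set.Ioc s t, ‖ℓ' σ - ℓ' t‖ with ha
      set b := ∫ σ in Set.Ioc s t, ‖y' σ - y' t‖ with hb
      have ha0 : 0 ≤ a := setIntegral_nonneg measurableSet_Ioc fun σ _ => norm_nonneg _
      have hb0 : 0 ≤ b := setIntegral_nonneg measurableSet_Ioc fun σ _ => norm_nonneg _
      -- displacement bound
      have hYb : ∀ σ ∈ Set.Icc s t, ‖(y t - y σ) - (t - σ) • y' t‖ ≤ b := by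
        intro σ hσ
        have hσI : σ ∈ Set.Icc (0:ℝ) T := ⟨hs0.le.trans hσ.1, hσ.2.trans htIoc.2⟩
        have hsub2 : Set.Ioc σ t ⊆ Set.Ioc s t := Set.Ioc_subset_Ioc hσ.1 le_rfl
        have hint : IntegrableOn y' (Set.Ioc σ t) volume := hy'st.mono_set hsub2
        have h1 : (∫ τ in Set.Ioc σ t, y' τ) = y t - y σ := by
          rw [← intervalIntegral.integral_of_le hσ.2]
          exact (hyFTC σ hσI t htIcc).symm
        have hμ : (volume (Set.Ioc σ t)).toReal = t - σ := by
          rw [Real.volume_Ioc, ENNReal.toReal_ofReal (by linarith [hσ.2])]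
        have h2 : (∫ _ in Set.Ioc σ t, y' t) = (t - σ) • y' t := by
          rw [setIntegral_const, Measure.real, hμ]
        have hconst : IntegrableOn (fun _ => y' t) (Set.Ioc σ t) volume :=
          integrableOn_const (lt_top_iff_ne_top.mp (by rw [Real.volume_Ioc]; exact ENNReal.ofReal_lt_top))
        have h3 : (y t - y σ) - (t - σ) • y' t = ∫ τ in Set.Ioc σ t, (y' τ - y' t) := by
          rw [integral_sub hint hconst, h1, h2]
        rw [h3]
        calc ‖∫ τ in Set.Ioc σ t, (y' τ - y' t)‖
            ≤ ∫ τ in Set.Ioc σ t, ‖y' τ - y' t‖ := norm_integral_le_integral_norm _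
          _ ≤ b := by
              rw [hb]
              refine setIntegral_mono_set ((hy'st.sub ?_).norm)
                (Eventually.of_forall fun τ => norm_nonneg _) hsub2.eventuallyLE
              exact integrableOn_const
                (lt_top_iff_ne_top.mp (by rw [Real.volume_Ioc]; exact ENNReal.ofReal_lt_top))
      have hPhi := hstar s t hs0.le hst.le htIoc.2
      have hco := hcoer (y t - y s)
      have hΦint : IntegrableOn (fun σ => ⟪ℓ' σ, y t - y σ⟫) (Set.Ioc s t) volume := by
        have h1 : (fun σ => ⟪ℓ' σ, y t - y σ⟫)
            = fun σ => ⟪ℓ' σ, y t⟫ - ⟪ℓ' σ, y σ⟫ := funext fun σ => inner_sub_right _ _ _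
        rw [h1]; exact (hinconst (y t) s t hsub).sub (hinny.mono_set hsub)
      have htσ : (∫ σ in Set.Ioc s t, (t - σ)) = (t - s)^2 / 2 := by
        rw [← intervalIntegral.integral_of_le hst.le]
        have h1 : (∫ σ in s..t, (t - σ)) = (∫ σ in s..t, t) - ∫ σ in s..t, σ := by
          rw [← intervalIntegral.integral_sub intervalIntegrable_const
            intervalIntegral.intervalIntegrable_id]
        rw [h1, intervalIntegral.integral_const, integral_id, smul_eq_mul]
        ring
      have hq : IntegrableOn (fun σ : ℝ => (t - σ) * P) (Set.Ioc s t) volume :=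
        ((continuous_const.sub continuous_id).mul continuous_const).integrableOn_Ioc
      have hℓtconst : IntegrableOn (fun _ : ℝ => ℓ' t) (Set.Ioc s t) volume :=
        integrableOn_const (lt_top_iff_ne_top.mp (by rw [Real.volume_Ioc]; exact ENNReal.ofReal_lt_top))
      have hΦerr : |(∫ σ in Set.Ioc s t, ⟪ℓ' σ, y t - y σ⟫) - (t - s)^2 / 2 * P|
          ≤ a * ((t - s) * ‖y' t‖ + b) + (t - s) * (‖ℓ' t‖ * b) := by
        have hfdef : (∫ σ in Set.Ioc s t, ⟪ℓ' σ, y t - y σ⟫) - (t - s)^2 / 2 * P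
            = ∫ σ in Set.Ioc s t, (⟪ℓ' σ, y t - y σ⟫ - (t - σ) * P) := by
          rw [integral_sub hΦint hq, integral_mul_const, htσ]
        rw [hfdef, ← Real.norm_eq_abs]
        have hbound : ∀ᵐ σ ∂(volume.restrict (Set.Ioc s t)),
            ‖⟪ℓ' σ, y t - y σ⟫ - (t - σ) * P‖
              ≤ ‖ℓ' σ - ℓ' t‖ * ((t - s) * ‖y' t‖ + b) + ‖ℓ' t‖ * b := by
          filter_upwards [ae_restrict_mem measurableSet_Ioc] with σ hσ
          have hYb2 := hYb σ ⟨hσ.1.le, hσ.2⟩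
          have hsplit2 : ⟪ℓ' σ, y t - y σ⟫ - (t - σ) * P
              = ⟪ℓ' σ - ℓ' t, y t - y σ⟫ + ⟪ℓ' t, (y t - y σ) - (t - σ) • y' t⟫ := by
            simp only [inner_sub_left, inner_sub_right, real_inner_smul_right]
            rw [hP]; ring
          rw [hsplit2]
          have hn1 : ‖⟪ℓ' σ - ℓ' t, y t - y σ⟫‖ ≤ ‖ℓ' σ - ℓ' t‖ * ‖y t - y σ‖ :=
            norm_inner_le_norm _ _
          have hn2 : ‖⟪ℓ' t, (y t - y σ) - (t - σ) • y' t⟫‖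
              ≤ ‖ℓ' t‖ * ‖(y t - y σ) - (t - σ) • y' t‖ := norm_inner_le_norm _ _
          have hY : ‖y t - y σ‖ ≤ (t - s) * ‖y' t‖ + b := by
            have h4 : ‖y t - y σ‖ ≤ ‖(y t - y σ) - (t - σ) • y' t‖ + ‖(t - σ) • y' t‖ := by
              have h5 := norm_add_le ((y t - y σ) - (t - σ) • y' t) ((t - σ) • y' t)
              simpa using h5
            have h5 : ‖(t - σ) • y' t‖ = (t - σ) * ‖y' t‖ := by
              rw [norm_smul, Real.norm_eq_abs, abs_of_nonneg (by linarith [hσ.2])]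
            have h6 : (t - σ) * ‖y' t‖ ≤ (t - s) * ‖y' t‖ :=
              mul_le_mul_of_nonneg_right (by linarith [hσ.1]) (norm_nonneg _)
            linarith
          calc ‖⟪ℓ' σ - ℓ' t, y t - y σ⟫ + ⟪ℓ' t, (y t - y σ) - (t - σ) • y' t⟫‖
              ≤ ‖⟪ℓ' σ - ℓ' t, y t - y σ⟫‖ + ‖⟪ℓ' t, (y t - y σ) - (t - σ) • y' t⟫‖ :=
                norm_add_le _ _
            _ ≤ ‖ℓ' σ - ℓ' t‖ * ((t - s) * ‖y' t‖ + b) + ‖ℓ' t‖ * b := by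
                have h7 : ‖ℓ' σ - ℓ' t‖ * ‖y t - y σ‖
                    ≤ ‖ℓ' σ - ℓ' t‖ * ((t - s) * ‖y' t‖ + b) :=
                  mul_le_mul_of_nonneg_left hY (norm_nonneg _)
                have h8 : ‖ℓ' t‖ * ‖(y t - y σ) - (t - σ) • y' t‖ ≤ ‖ℓ' t‖ * b :=
                  mul_le_mul_of_nonneg_left hYb2 (norm_nonneg _)
                linarith
        have hbint : Integrable
            (fun σ => ‖ℓ' σ - ℓ' t‖ * ((t - s) * ‖y' t‖ + b) + ‖ℓ' t‖ * b)
            (volume.restrict (Set.Ioc s t)) := by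
          refine Integrable.add (Integrable.mul_const ?_ _) ?_
          · exact (hℓst.sub hℓtconst).norm
          · exact integrableOn_const
              (lt_top_iff_ne_top.mp (by rw [Real.volume_Ioc]; exact ENNReal.ofReal_lt_top))
        have i1 : IntegrableOn (fun σ => ‖ℓ' σ - ℓ' t‖ * ((t - s) * ‖y' t‖ + b))
            (Set.Ioc s t) volume := (hℓst.sub hℓtconst).norm.mul_const _
        have i2 : IntegrableOn (fun _ : ℝ => ‖ℓ' t‖ * b) (Set.Ioc s t) volume :=
          integrableOn_const
            (lt_top_iff_ne_top.mp (by rw [Real.volume_Ioc]; exact ENNReal.ofReal_lt_top))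
        have hle := norm_integral_le_of_norm_le hbint hbound
        rw [integral_add i1 i2, integral_mul_const, setIntegral_const,
          Real.volume_real_Ioc_of_le hst.le, smul_eq_mul, ← ha] at hle
        exact hle
      -- triangle bounds at σ = s
      have hds := hYb s ⟨le_rfl, hst.le⟩
      have hsm : ‖(t - s) • y' t‖ = (t - s) * ‖y' t‖ := by
        rw [norm_smul, Real.norm_eq_abs, abs_of_nonneg hδp.le]
      have h1 : (t - s) * ‖y' t‖ ≤ ‖y t - y s‖ + b := by
        have h5 := norm_sub_le (y t - y s) ((y t - y s) - (t - s) • y' t)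
        rw [show (y t - y s) - ((y t - y s) - (t - s) • y' t) = (t - s) • y' t
          from by abel] at h5
        rw [hsm] at h5
        linarith
      have h2 : ‖y t - y s‖ ≤ (t - s) * ‖y' t‖ + b := by
        have h6 := norm_add_le ((y t - y s) - (t - s) • y' t) ((t - s) • y' t)
        rw [show ((y t - y s) - (t - s) • y' t) + (t - s) • y' t = y t - y s
          from by abel, hsm] at h6
        linarith
      have habs := (abs_le.mp hΦerr).2
      have hpos : (0:ℝ) < (t - s)^2 := by positivity
      have hQ : (c/2) * ‖y' t‖^2 * (t - s)^2
          ≤ (t - s)^2/2*P + a*((t - s)*‖y' t‖ + b) + (t - s)*(‖ℓ' t‖*b)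
            + c*b*((t - s)*‖y' t‖) + (3*c/2)*b^2 := by
        nlinarith [mul_self_le_mul_self (mul_nonneg hδp.le (norm_nonneg (y' t))) h1,
          mul_le_mul_of_nonneg_left h2 (mul_nonneg hc.le hb0),
          hPhi, hco, habs, hb0, ha0, norm_nonneg (y t - y s), norm_nonneg (y' t), hc.le]
      have hfin : (c/2) * ‖y' t‖^2
          ≤ ((t - s)^2/2*P + a*((t - s)*‖y' t‖ + b) + (t - s)*(‖ℓ' t‖*b)
            + c*b*((t - s)*‖y' t‖) + (3*c/2)*b^2) / (t - s)^2 := by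
        rw [le_div_iff₀ hpos]; exact hQ
      have heq' : ((t - s)^2/2*P + a*((t - s)*‖y' t‖ + b) + (t - s)*(‖ℓ' t‖*b)
            + c*b*((t - s)*‖y' t‖) + (3*c/2)*b^2) / (t - s)^2
          = (1/2)*P + a / (t - s) * (‖y' t‖ + b / (t - s)) + ‖ℓ' t‖ * (b / (t - s))
            + c * (b / (t - s)) * ‖y' t‖ + (3*c/2) * (b / (t - s))^2 := by
        field_simp
      rw [← heq']
      exact hfin
    have hlim : Tendsto (fun s => (1/2)*P
          + ((∫ σ in Set.Ioc s t, ‖ℓ' σ - ℓ' t‖) / (t - s))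
              * (‖y' t‖ + (∫ σ in Set.Ioc s t, ‖y' σ - y' t‖) / (t - s))
          + ‖ℓ' t‖ * ((∫ σ in Set.Ioc s t, ‖y' σ - y' t‖) / (t - s))
          + c * ((∫ σ in Set.Ioc s t, ‖y' σ - y' t‖) / (t - s)) * ‖y' t‖
          + (3*c/2) * ((∫ σ in Set.Ioc s t, ‖y' σ - y' t‖) / (t - s))^2)
        (𝓝[<] t) (𝓝 ((1/2)*P)) := by
      have c1 : Tendsto (fun _ : ℝ => (1/2)*P) (𝓝[<] t) (𝓝 ((1/2)*P)) := tendsto_const_nhds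
      have c2 : Tendsto (fun _ : ℝ => ‖y' t‖) (𝓝[<] t) (𝓝 (‖y' t‖)) := tendsto_const_nhds
      have c3 : Tendsto (fun _ : ℝ => ‖ℓ' t‖) (𝓝[<] t) (𝓝 (‖ℓ' t‖)) := tendsto_const_nhds
      have c4 : Tendsto (fun _ : ℝ => c) (𝓝[<] t) (𝓝 c) := tendsto_const_nhds
      have hbig := (((c1.add (hLt.mul (c2.add hYt))).add (c3.mul hYt)).add
          ((c4.mul hYt).mul c2)).add ((hYt.pow 2).const_mul (3*c/2))
      simpa using hbig
    exact ge_of_tendsto hlim hev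
  have hCS : ⟪ℓ' t, y' t⟫ ≤ ‖ℓ' t‖ * ‖y' t‖ := real_inner_le_norm _ _
  have h1 : c * ‖y' t‖ ≤ ‖ℓ' t‖ := by nlinarith
  rw [one_div, inv_mul_eq_div, le_div_iff₀ hc]
  linarith [mul_comm (‖y' t‖) c]
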